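/- Bruhat decomposition with unipotent representatives: GL_n(F) is the disjoint union over w ∈ S_n of the double cosets N_w w B, where N_w = N ∩ w N^- w^{-1} and B is the Borel subgroup of upper triangular matrices. -/

import Mathlib

open Matrix

variable (K : Type) [Field K]

/-- The permutation matrix of `w`, with `w_{ij} = 1` iff `w(j) = i`. -/
def permMat (n : ℕ) (w : Equiv.Perm (Fin n)) : Matrix (Fin n) (Fin n) K :=
  fun i j => if w j = i then 1 else 0

/-- upper triangular unipotent. -/
def IsUnipUpper {n : ℕ} (m : Matrix (Fin n) (Fin n) K) : Prop :=
  (∀ i : Fin n, m i i = 1) ∧ (∀ i j : Fin n, j < i → m i j = 0)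

/-- lower triangular unipotent. -/
def IsUnipLower {n : ℕ} (m : Matrix (Fin n) (Fin n) K) : Prop :=
  (∀ i : Fin n, m i i = 1) ∧ (∀ i j : Fin n, i < j → m i j = 0)

/-- `N_w = N ∩ w N⁻ w⁻¹`. -/
def Nw (n : ℕ) (w : Equiv.Perm (Fin n)) : Set (Matrix (Fin n) (Fin n) K) :=
  {m | IsUnipUpper K m ∧
    ∃ m' : Matrix (Fin n) (Fin n) K, IsUnipLower K m' ∧
      m = permMat K n w * m' * permMat K n w⁻¹}

/-- invertible upper triangular matrix (an element of the Borel `B`). -/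
def IsBorel {n : ℕ} (b : Matrix (Fin n) (Fin n) K) : Prop :=
  (∀ i j : Fin n, j < i → b i j = 0) ∧ (∀ i : Fin n, b i i ≠ 0)

namespace BruhatAux

variable {K}

/-! ### permutation matrix lemmas -/

lemma permMat_mul_apply {n : ℕ} (u : Equiv.Perm (Fin n)) (X : Matrix (Fin n) (Fin n) K)
    (i j : Fin n) : (permMat K n u * X) i j = X (u⁻¹ i) j := by
  rw [Matrix.mul_apply]
  rw [Finset.sum_eq_single (u⁻¹ i)]
  · simp [permMat]
  · intro k _ hk
    have : u k ≠ i := by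
      intro h
      exact hk (by rw [← h, Equiv.Perm.inv_def, Equiv.symm_apply_apply])
    simp [permMat, this]
  · simp

lemma mul_permMat_apply {n : ℕ} (u : Equiv.Perm (Fin n)) (X : Matrix (Fin n) (Fin n) K)
    (i j : Fin n) : (X * permMat K n u) i j = X i (u j) := by
  rw [Matrix.mul_apply]
  rw [Finset.sum_eq_single (u j)]
  · simp [permMat]
  · intro k _ hk
    have : u j ≠ k := fun h => hk h.symm
    simp [permMat, this]
  · simp

lemma permMat_mul_permMat {n : ℕ} (u v : Equiv.Perm (Fin n)) :
    permMat K n u * permMat K n v = permMat K n (u * v) := by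
  ext i j
  rw [permMat_mul_apply]
  show (if v j = u⁻¹ i then (1:K) else 0) = (if (u * v) j = i then 1 else 0)
  by_cases h : v j = u⁻¹ i
  · rw [if_pos h, if_pos (by rw [Equiv.Perm.mul_apply, h, Equiv.Perm.inv_def, Equiv.apply_symm_apply])]
  · rw [if_neg h, if_neg (by
      intro hc
      apply h
      rw [Equiv.Perm.mul_apply] at hc
      rw [← hc, Equiv.Perm.inv_def, Equiv.symm_apply_apply])]

lemma permMat_one {n : ℕ} : permMat K n 1 = 1 := by
  ext i j
  show (if (1 : Equiv.Perm (Fin n)) j = i then (1:K) else 0) = _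
  rw [Matrix.one_apply]
  simp [eq_comm]

lemma permMat_mul_inv {n : ℕ} (u : Equiv.Perm (Fin n)) :
    permMat K n u * permMat K n u⁻¹ = 1 := by
  rw [permMat_mul_permMat, mul_inv_cancel, permMat_one]

lemma conj_apply {n : ℕ} (u : Equiv.Perm (Fin n)) (X : Matrix (Fin n) (Fin n) K) (i j : Fin n) :
    (permMat K n u⁻¹ * X * permMat K n u) i j = X (u i) (u j) := by
  rw [mul_permMat_apply, permMat_mul_apply, inv_inv]

lemma permMat_conj_cancel {n : ℕ} (u : Equiv.Perm (Fin n)) (X : Matrix (Fin n) (Fin n) K) :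
    permMat K n u * (permMat K n u⁻¹ * X * permMat K n u) * permMat K n u⁻¹ = X := by
  have h : permMat K n u * (permMat K n u⁻¹ * X * permMat K n u) * permMat K n u⁻¹ =
      (permMat K n u * permMat K n u⁻¹) * X * (permMat K n u * permMat K n u⁻¹) := by
    simp only [Matrix.mul_assoc]
  rw [h, permMat_mul_inv, one_mul, mul_one]

/-! ### block-diagonal (1 ⊕ X) matrices -/

def bd {n : ℕ} (X : Matrix (Fin n) (Fin n) K) : Matrix (Fin (n + 1)) (Fin (n + 1)) K :=
  Matrix.of fun p q =>
    Fin.cases (Fin.cases (1 : K) (fun _ => 0) q) (fun p' => Fin.cases 0 (fun q' => X p' q') q) p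

@[simp] lemma bd_zero_zero {n : ℕ} (X : Matrix (Fin n) (Fin n) K) : bd X 0 0 = 1 := by
  simp [bd]

@[simp] lemma bd_zero_succ {n : ℕ} (X : Matrix (Fin n) (Fin n) K) (q : Fin n) :
    bd X 0 q.succ = 0 := by simp [bd]

@[simp] lemma bd_succ_zero {n : ℕ} (X : Matrix (Fin n) (Fin n) K) (p : Fin n) :
    bd X p.succ 0 = 0 := by simp [bd]

@[simp] lemma bd_succ_succ {n : ℕ} (X : Matrix (Fin n) (Fin n) K) (p q : Fin n) :
    bd X p.succ q.succ = X p q := by simp [bd]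

lemma bd_zero_apply {n : ℕ} (X : Matrix (Fin n) (Fin n) K) (q : Fin (n + 1)) :
    bd X 0 q = if q = 0 then 1 else 0 := by
  cases q using Fin.cases with
  | zero => simp
  | succ q => simp [Fin.succ_ne_zero]

lemma bd_apply_zero {n : ℕ} (X : Matrix (Fin n) (Fin n) K) (q : Fin (n + 1)) :
    bd X q 0 = if q = 0 then 1 else 0 := by
  cases q using Fin.cases with
  | zero => simp
  | succ q => simp [Fin.succ_ne_zero]

lemma bd_mul {n : ℕ} (X Y : Matrix (Fin n) (Fin n) K) : bd X * bd Y = bd (X * Y) := by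
  ext i j
  rw [Matrix.mul_apply, Fin.sum_univ_succ]
  cases i using Fin.cases with
  | zero =>
    cases j using Fin.cases with
    | zero => simp
    | succ q => simp
  | succ p =>
    cases j using Fin.cases with
    | zero => simp
    | succ q => simp [Matrix.mul_apply]

lemma bd_diag_one {n : ℕ} {X : Matrix (Fin n) (Fin n) K} (h : ∀ p, X p p = 1) (q : Fin (n + 1)) :
    bd X q q = 1 := by
  cases q using Fin.cases with
  | zero => simp
  | succ p => simp [h p]

/-! ### triangular matrix lemmas -/

lemma upper_mul_upper {n : ℕ} {P Q : Matrix (Fin n) (Fin n) K}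
    (hP : ∀ i j, j < i → P i j = 0) (hQ : ∀ i j, j < i → Q i j = 0) :
    ∀ i j, j < i → (P * Q) i j = 0 := by
  intro i j hji
  rw [Matrix.mul_apply]
  apply Finset.sum_eq_zero
  intro k _
  rcases lt_or_ge k i with hk | hk
  · rw [hP i k hk, zero_mul]
  · rw [hQ k j (lt_of_lt_of_le hji hk), mul_zero]

lemma upper_mul_diag {n : ℕ} {P Q : Matrix (Fin n) (Fin n) K}
    (hP : ∀ i j, j < i → P i j = 0) (hQ : ∀ i j, j < i → Q i j = 0) (i : Fin n) :
    (P * Q) i i = P i i * Q i i := by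
  rw [Matrix.mul_apply]
  rw [Finset.sum_eq_single i]
  · intro k _ hk
    rcases lt_or_gt_of_ne hk with hlt | hgt
    · rw [hP i k hlt, zero_mul]
    · rw [hQ k i hgt, mul_zero]
  · simp

lemma borel_mul {n : ℕ} {P Q : Matrix (Fin n) (Fin n) K}
    (hP : IsBorel K P) (hQ : IsBorel K Q) : IsBorel K (P * Q) := by
  refine ⟨upper_mul_upper hP.1 hQ.1, fun i => ?_⟩
  rw [upper_mul_diag hP.1 hQ.1]
  exact mul_ne_zero (hP.2 i) (hQ.2 i)

/-! ### uniqueness -/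

lemma uniq {n : ℕ} (G : Matrix (Fin n) (Fin n) K) (w1 w2 : Equiv.Perm (Fin n))
    (m1 m2 b1 b2 : Matrix (Fin n) (Fin n) K)
    (hm1 : IsUnipUpper K m1) (hm2 : IsUnipUpper K m2)
    (hb1 : IsBorel K b1) (hb2 : IsBorel K b2)
    (h1 : G = m1 * permMat K n w1 * b1) (h2 : G = m2 * permMat K n w2 * b2) :
    w1 = w2 := by
  have hm2BT : m2.BlockTriangular id := fun i j h => hm2.2 i j h
  have hm1BT : m1.BlockTriangular id := fun i j h => hm1.2 i j h
  have hb1BT : b1.BlockTriangular id := fun i j h => hb1.1 i j h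
  have hb2BT : b2.BlockTriangular id := fun i j h => hb2.1 i j h
  have hdm2 : IsUnit m2.det := by
    rw [Matrix.det_of_upperTriangular hm2BT]
    simp [hm2.1]
  have hdb1 : IsUnit b1.det := by
    rw [Matrix.det_of_upperTriangular hb1BT]
    exact isUnit_iff_ne_zero.mpr (Finset.prod_ne_zero_iff.mpr fun i _ => hb1.2 i)
  have E0 : m1 * permMat K n w1 * b1 = m2 * permMat K n w2 * b2 := h1.symm.trans h2
  have t1 : m2⁻¹ * m1 * permMat K n w1 * b1 = permMat K n w2 * b2 := by
    have h := congrArg (fun X => m2⁻¹ * X) E0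
    simp only [← Matrix.mul_assoc] at h
    rwa [Matrix.nonsing_inv_mul _ hdm2, one_mul] at h
  have t2 : m2⁻¹ * m1 * permMat K n w1 = permMat K n w2 * (b2 * b1⁻¹) := by
    have h := congrArg (fun X => X * b1⁻¹) t1
    simp only [Matrix.mul_assoc] at h
    rw [Matrix.mul_nonsing_inv _ hdb1, mul_one] at h
    simpa only [Matrix.mul_assoc] using h
  letI := m2.invertibleOfIsUnitDet hdm2
  have huBT : (m2⁻¹ * m1).BlockTriangular id :=
    (Matrix.blockTriangular_inv_of_blockTriangular hm2BT).mul hm1BT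
  letI := b1.invertibleOfIsUnitDet hdb1
  have hb1invBT : b1⁻¹.BlockTriangular id :=
    Matrix.blockTriangular_inv_of_blockTriangular hb1BT
  have hb1invdiag : ∀ i, b1⁻¹ i i ≠ 0 := by
    intro i
    have h11 : (b1 * b1⁻¹) i i = 1 := by
      rw [Matrix.mul_nonsing_inv _ hdb1, Matrix.one_apply_eq]
    rw [upper_mul_diag (fun i j h => hb1BT h) (fun i j h => hb1invBT h)] at h11
    intro h
    rw [h, mul_zero] at h11
    exact zero_ne_one h11
  have hbdiag : ∀ i, (b2 * b1⁻¹) i i ≠ 0 := by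
    intro i
    rw [upper_mul_diag (fun i j h => hb2BT h) (fun i j h => hb1invBT h)]
    exact mul_ne_zero (hb2.2 i) (hb1invdiag i)
  have hkey : ∀ i, (m2⁻¹ * m1) (w2 i) (w1 i) = (b2 * b1⁻¹) i i := by
    intro i
    have h := congrArg (fun X : Matrix (Fin n) (Fin n) K => X (w2 i) i) t2
    rwa [mul_permMat_apply, permMat_mul_apply, Equiv.Perm.inv_def, Equiv.symm_apply_apply] at h
  have hle : ∀ i, (w2 i : ℕ) ≤ (w1 i : ℕ) := by
    intro i
    by_contra h
    push_neg at h
    have hlt : w1 i < w2 i := h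
    have h0 := huBT (show id (w1 i) < id (w2 i) from hlt)
    rw [hkey i] at h0
    exact hbdiag i h0
  have hsum : ∑ i, (w2 i : ℕ) = ∑ i, (w1 i : ℕ) :=
    (Equiv.sum_comp w2 (fun i : Fin n => (i : ℕ))).trans
      (Equiv.sum_comp w1 (fun i : Fin n => (i : ℕ))).symm
  have heq := (Finset.sum_eq_sum_iff_of_le fun i _ => hle i).mp hsum
  exact Equiv.ext fun i => Fin.ext ((heq i (Finset.mem_univ i)).symm)

/-! ### existence -/

lemma onecol_mul {n : ℕ} (i0 : Fin n) (c : Fin n → K) (X : Matrix (Fin n) (Fin n) K)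
    (i j : Fin n) :
    ((1 + Matrix.of (fun i _j => if _j = i0 then c i else 0)) * X) i j
      = X i j + c i * X i0 j := by
  rw [Matrix.add_mul, Matrix.one_mul, Matrix.add_apply]
  congr 1
  rw [Matrix.mul_apply]
  have h : ∀ k, (Matrix.of (fun i _j => if _j = i0 then c i else 0) : Matrix (Fin n) (Fin n) K) i k
      * X k j = if k = i0 then c i * X k j else 0 := by
    intro k
    by_cases hk : k = i0 <;> simp [hk]
  rw [Finset.sum_congr rfl fun k _ => h k, Finset.sum_ite_eq']
  simp

def rowm {n : ℕ} (r : Fin (n + 1) → K) : Matrix (Fin (n + 1)) (Fin (n + 1)) K :=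
  Matrix.of fun i j => if i = 0 then r j else if i = j then 1 else 0


lemma rowm_zero_apply {n : ℕ} (r : Fin (n + 1) → K) (j : Fin (n + 1)) :
    (rowm r : Matrix _ _ K) 0 j = r j := by simp [rowm]

lemma rowm_succ_apply {n : ℕ} (r : Fin (n + 1) → K) (k : Fin n) (j : Fin (n + 1)) :
    (rowm r : Matrix _ _ K) k.succ j = if k.succ = j then 1 else 0 := by
  simp [rowm, Fin.succ_ne_zero]

lemma mul_rowm_zero {n : ℕ} (r : Fin (n + 1) → K) (X : Matrix (Fin (n + 1)) (Fin (n + 1)) K)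
    (i : Fin (n + 1)) : (X * rowm r) i 0 = X i 0 * r 0 := by
  rw [Matrix.mul_apply, Fin.sum_univ_succ]
  have h0 : (rowm r : Matrix _ _ K) 0 0 = r 0 := by simp [rowm]
  have hs : ∀ k : Fin n, (rowm r : Matrix _ _ K) k.succ 0 = 0 := by
    intro k; simp [rowm, Fin.succ_ne_zero]
  rw [h0]
  simp [hs]

lemma mul_rowm_succ {n : ℕ} (r : Fin (n + 1) → K) (X : Matrix (Fin (n + 1)) (Fin (n + 1)) K)
    (i : Fin (n + 1)) (q : Fin n) :
    (X * rowm r) i q.succ = X i 0 * r q.succ + X i q.succ := by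
  rw [Matrix.mul_apply, Fin.sum_univ_succ]
  have h0 : (rowm r : Matrix _ _ K) 0 q.succ = r q.succ := by simp [rowm]
  have hs : ∀ k : Fin n, (rowm r : Matrix _ _ K) k.succ q.succ
      = if k = q then 1 else 0 := by
    intro k
    simp only [rowm, Matrix.of_apply, if_neg (Fin.succ_ne_zero k)]
    simp [Fin.succ_inj]
  rw [h0]
  congr 1
  have h : ∀ k : Fin n, X i k.succ * (rowm r : Matrix _ _ K) k.succ q.succ
      = if k = q then X i k.succ else 0 := by
    intro k
    rw [hs k]
    by_cases hk : k = q <;> simp [hk]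
  rw [Finset.sum_congr rfl fun k _ => h k, Finset.sum_ite_eq']
  simp

lemma exist (n : ℕ) : ∀ g : Matrix (Fin n) (Fin n) K, g.det ≠ 0 →
    ∃ (w : Equiv.Perm (Fin n)) (m b : Matrix (Fin n) (Fin n) K),
      m ∈ Nw K n w ∧ IsBorel K b ∧ g = m * permMat K n w * b := by
  induction n with
  | zero =>
    intro g _
    refine ⟨1, 1, 1, ⟨⟨fun i => i.elim0, fun i => i.elim0⟩, 1,
      ⟨fun i => i.elim0, fun i => i.elim0⟩, Matrix.ext fun i => i.elim0⟩,
      ⟨fun i => i.elim0, fun i => i.elim0⟩, Matrix.ext fun i => i.elim0⟩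
  | succ N ih =>
    intro g hg
    classical
    -- the pivot row of column 0
    have hne : (Finset.univ.filter (fun i : Fin (N + 1) => g i 0 ≠ 0)).Nonempty := by
      by_contra h
      rw [Finset.not_nonempty_iff_eq_empty, Finset.filter_eq_empty_iff] at h
      exact hg (Matrix.det_eq_zero_of_column_eq_zero 0 fun i =>
        not_not.mp (h (Finset.mem_univ i)))
    obtain ⟨i0, hmem, hmax⟩ :
        ∃ i0, i0 ∈ Finset.univ.filter (fun i : Fin (N + 1) => g i 0 ≠ 0) ∧
          ∀ i ∈ Finset.univ.filter (fun i : Fin (N + 1) => g i 0 ≠ 0), i ≤ i0 :=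
      ⟨_, (Finset.univ.filter _).max'_mem hne, fun i hi => Finset.le_max' _ i hi⟩
    have h00 : g i0 0 ≠ 0 := (Finset.mem_filter.mp hmem).2
    have htop : ∀ i, i0 < i → g i 0 = 0 := by
      intro i hi
      by_contra hne'
      exact absurd (hmax i (Finset.mem_filter.mpr ⟨Finset.mem_univ i, hne'⟩)) (not_le.mpr hi)
    obtain ⟨a, ha_def⟩ : ∃ a : K, a = g i0 0 := ⟨_, rfl⟩
    have ha0 : a ≠ 0 := ha_def ▸ h00
    obtain ⟨v, hv_def⟩ : ∃ v : Fin (N + 1) → K,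
        v = fun i => if i < i0 then g i 0 * a⁻¹ else 0 := ⟨_, rfl⟩
    have hv0 : v i0 = 0 := by rw [hv_def]; simp
    obtain ⟨E, hE_def⟩ : ∃ E : Matrix (Fin (N + 1)) (Fin (N + 1)) K,
        E = 1 + Matrix.of (fun i _j => if _j = i0 then -(v i) else 0) := ⟨_, rfl⟩
    obtain ⟨F, hF_def⟩ : ∃ F : Matrix (Fin (N + 1)) (Fin (N + 1)) K,
        F = 1 + Matrix.of (fun i _j => if _j = i0 then v i else 0) := ⟨_, rfl⟩
    have hE_apply : ∀ i j, E i j = (1 : Matrix (Fin (N+1)) (Fin (N+1)) K) i j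
        + (if j = i0 then -(v i) else 0) := by
      intro i j; rw [hE_def]; simp
    have hE_mul : ∀ X : Matrix (Fin (N+1)) (Fin (N+1)) K, ∀ i j,
        (E * X) i j = X i j + (-(v i)) * X i0 j := by
      intro X i j
      rw [hE_def, onecol_mul]
    have hFE : F * E = 1 := by
      ext i j
      rw [hF_def, onecol_mul, hE_apply i j, hE_apply i0 j]
      by_cases hj : j = i0
      · subst hj
        rw [if_pos rfl, if_pos rfl, hv0, neg_zero, add_zero, Matrix.one_apply_eq]
        ring
      · rw [if_neg hj, if_neg hj, add_zero, add_zero,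
          Matrix.one_apply_ne (Ne.symm hj), mul_zero, add_zero]
    obtain ⟨r, hr0, hrs⟩ : ∃ r : Fin (N + 1) → K, r 0 = a⁻¹ ∧
        ∀ q : Fin N, r q.succ = -(g i0 q.succ * a⁻¹) :=
      ⟨fun j => if j = 0 then a⁻¹ else -(g i0 j * a⁻¹), by simp,
        fun q => by simp [Fin.succ_ne_zero]⟩
    obtain ⟨r', hr'0, hr's⟩ : ∃ r' : Fin (N + 1) → K, r' 0 = a ∧
        ∀ q : Fin N, r' q.succ = g i0 q.succ :=
      ⟨fun j => if j = 0 then a else g i0 j, by simp, fun q => by simp [Fin.succ_ne_zero]⟩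
    obtain ⟨C, hC_def⟩ : ∃ C : Matrix (Fin (N + 1)) (Fin (N + 1)) K, C = rowm r := ⟨_, rfl⟩
    obtain ⟨Ci, hCi_def⟩ : ∃ Ci : Matrix (Fin (N + 1)) (Fin (N + 1)) K, Ci = rowm r' := ⟨_, rfl⟩
    have hCCi : C * Ci = 1 := by
      ext i j
      rw [hCi_def]
      cases j using Fin.cases with
      | zero =>
        rw [mul_rowm_zero, hr'0, hC_def]
        by_cases hi : i = 0
        · subst hi
          rw [rowm_zero_apply, hr0, inv_mul_cancel₀ ha0, Matrix.one_apply_eq]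
        · obtain ⟨p, hp⟩ := (Fin.eq_zero_or_eq_succ i).resolve_left hi
          subst hp
          rw [rowm_succ_apply, if_neg (Fin.succ_ne_zero p), zero_mul, Matrix.one_apply_ne hi]
      | succ q =>
        rw [mul_rowm_succ, hr's q, hC_def]
        by_cases hi : i = 0
        · subst hi
          rw [rowm_zero_apply, rowm_zero_apply, hr0, hrs q,
            Matrix.one_apply_ne (Ne.symm (Fin.succ_ne_zero q))]
          ring
        · obtain ⟨p, hp⟩ := (Fin.eq_zero_or_eq_succ i).resolve_left hi
          subst hp
          rw [rowm_succ_apply, rowm_succ_apply, if_neg (Fin.succ_ne_zero p), zero_mul,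
            zero_add, Matrix.one_apply]
    obtain ⟨A, hA_def⟩ : ∃ A : Matrix (Fin (N + 1)) (Fin (N + 1)) K, A = E * g * C := ⟨_, rfl⟩
    have hEg_i0 : ∀ k, (E * g) i0 k = g i0 k := by
      intro k
      rw [hE_mul, hv0]
      ring
    have hA_row : ∀ j, A i0 j = if j = 0 then 1 else 0 := by
      intro j
      cases j using Fin.cases with
      | zero =>
        rw [hA_def, hC_def, mul_rowm_zero, hEg_i0, hr0, if_pos rfl, ← ha_def,
          mul_inv_cancel₀ ha0]
      | succ q =>
        rw [hA_def, hC_def, mul_rowm_succ, hEg_i0, hEg_i0, hrs q,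
          if_neg (Fin.succ_ne_zero q), ← ha_def]
        field_simp
        ring
    have hA_col : ∀ i, A i 0 = if i = i0 then 1 else 0 := by
      intro i
      rw [hA_def, hC_def, mul_rowm_zero, hr0, hE_mul]
      rcases lt_trichotomy i i0 with hlt | heq | hgt
      · rw [hv_def]
        simp only
        rw [if_pos hlt, if_neg (ne_of_lt hlt), ← ha_def]
        field_simp
        ring
      · subst heq
        rw [hv0, ← ha_def, if_pos rfl]
        field_simp
        ring
      · rw [htop i hgt, hv_def]
        simp only
        rw [if_neg (not_lt.mpr (le_of_lt hgt)), if_neg (ne_of_gt hgt)]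
        ring
    obtain ⟨g', hg'_def⟩ : ∃ g' : Matrix (Fin N) (Fin N) K,
        g' = A.submatrix i0.succAbove Fin.succ := ⟨_, rfl⟩
    -- determinant bookkeeping
    have hdetE : E.det ≠ 0 := by
      have h := congrArg Matrix.det hFE
      rw [Matrix.det_mul, Matrix.det_one] at h
      intro h0
      rw [h0, mul_zero] at h
      exact zero_ne_one h
    have hdetC : C.det ≠ 0 := by
      have h := congrArg Matrix.det hCCi
      rw [Matrix.det_mul, Matrix.det_one] at h
      intro h0
      rw [h0, zero_mul] at h
      exact zero_ne_one h
    have hdetA : A.det ≠ 0 := by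
      rw [hA_def, Matrix.det_mul, Matrix.det_mul]
      exact mul_ne_zero (mul_ne_zero hdetE hg) hdetC
    have hdetg' : g'.det ≠ 0 := by
      have hexp := Matrix.det_succ_column_zero A
      rw [Finset.sum_eq_single i0] at hexp
      · rw [hA_col i0, if_pos rfl, mul_one] at hexp
        intro h
        rw [hg'_def] at h
        rw [h, mul_zero] at hexp
        exact hdetA hexp
      · intro k _ hk
        rw [hA_col k, if_neg hk, mul_zero, zero_mul]
      · intro h
        exact absurd (Finset.mem_univ i0) h
    obtain ⟨w', m', b', hm', hb', heq'⟩ := ih g' hdetg'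
    obtain ⟨hm'u, mm', hmm'l, hmm'e⟩ := hm'
    -- the permutations
    obtain ⟨ρ, hρ_def⟩ : ∃ ρ : Equiv.Perm (Fin (N + 1)), ρ = i0.cycleRange := ⟨_, rfl⟩
    obtain ⟨wS, hwS_def⟩ : ∃ wS : Equiv.Perm (Fin (N + 1)),
        wS = Equiv.Perm.decomposeFin.symm (0, w') := ⟨_, rfl⟩
    obtain ⟨w, hw_def⟩ : ∃ w : Equiv.Perm (Fin (N + 1)), w = ρ⁻¹ * wS := ⟨_, rfl⟩
    have hρ0 : ρ i0 = 0 := by rw [hρ_def]; exact Fin.cycleRange_self i0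
    have hρs : ∀ p : Fin N, ρ.symm p.succ = i0.succAbove p := by
      intro p; rw [hρ_def]; exact Fin.cycleRange_symm_succ i0 p
    have hρs' : ∀ p : Fin N, ρ (i0.succAbove p) = p.succ := by
      intro p
      rw [← hρs p, Equiv.apply_symm_apply]
    have hwS0 : wS 0 = 0 := by
      rw [hwS_def]; exact Equiv.Perm.decomposeFin_symm_apply_zero 0 w'
    have hwSs : ∀ q : Fin N, wS q.succ = (w' q).succ := by
      intro q
      rw [hwS_def, Equiv.Perm.decomposeFin_symm_apply_succ]
      simp
    have hw0 : w 0 = i0 := by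
      rw [hw_def]
      show ρ⁻¹ (wS 0) = i0
      rw [hwS0]
      show ρ.symm 0 = i0
      rw [hρ_def]
      exact Fin.cycleRange_symm_zero i0
    have hws : ∀ q : Fin N, w q.succ = i0.succAbove (w' q) := by
      intro q
      rw [hw_def]
      show ρ⁻¹ (wS q.succ) = _
      rw [hwSs q]
      exact hρs (w' q)
    have hwSbd : permMat K (N + 1) wS = bd (permMat K N w') := by
      ext i j
      show (if wS j = i then (1:K) else 0) = _
      cases i using Fin.cases with
      | zero =>
        cases j using Fin.cases with
        | zero => rw [hwS0]; simp
        | succ q => rw [hwSs q]; simp [Fin.succ_ne_zero]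
      | succ p =>
        cases j using Fin.cases with
        | zero =>
          rw [hwS0]
          simp [Ne.symm (Fin.succ_ne_zero p)]
        | succ q =>
          rw [hwSs q]
          rw [bd_succ_succ]
          show _ = (if w' q = p then (1:K) else 0)
          simp [Fin.succ_inj]
    have hmulw : permMat K (N + 1) ρ * permMat K (N + 1) w = bd (permMat K N w') := by
      rw [permMat_mul_permMat]
      have h : ρ * w = wS := by rw [hw_def, mul_inv_cancel_left]
      rw [h, hwSbd]
    obtain ⟨Mhat, hMhat_def⟩ : ∃ Mhat : Matrix (Fin (N + 1)) (Fin (N + 1)) K,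
        Mhat = permMat K (N + 1) ρ⁻¹ * bd m' * permMat K (N + 1) ρ := ⟨_, rfl⟩
    have hMhat_apply : ∀ i j, Mhat i j = bd m' (ρ i) (ρ j) := by
      intro i j
      rw [hMhat_def, conj_apply]
    obtain ⟨m, hm_def⟩ : ∃ m : Matrix (Fin (N + 1)) (Fin (N + 1)) K, m = F * Mhat := ⟨_, rfl⟩
    obtain ⟨b, hb_def⟩ : ∃ b : Matrix (Fin (N + 1)) (Fin (N + 1)) K, b = bd b' * Ci := ⟨_, rfl⟩
    have hm_apply : ∀ i j, m i j = bd m' (ρ i) (ρ j) + (if j = i0 then v i else 0) := by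
      intro i j
      rw [hm_def, hF_def, onecol_mul, hMhat_apply, hMhat_apply, hρ0, bd_zero_apply]
      congr 1
      have hiff : (ρ j = 0) ↔ (j = i0) := by
        rw [← hρ0]
        exact ρ.apply_eq_iff_eq
      by_cases hj : j = i0
      · rw [if_pos (hiff.mpr hj), if_pos hj, mul_one]
      · rw [if_neg (fun h => hj (hiff.mp h)), if_neg hj, mul_zero]
    -- m is upper unipotent
    have hm_upper : IsUnipUpper K m := by
      constructor
      · intro i
        by_cases hi : i = i0
        · subst hi
          rw [hm_apply, hρ0, if_pos rfl, hv0, bd_zero_zero, add_zero]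
        · rw [hm_apply, if_neg hi, add_zero]
          exact bd_diag_one hm'u.1 (ρ i)
      · intro i j hji
        rw [hm_apply]
        have hif : (if j = i0 then v i else 0) = 0 := by
          by_cases hj : j = i0
          · subst hj
            rw [if_pos rfl, hv_def]
            simp only
            rw [if_neg (asymm hji)]
          · rw [if_neg hj]
        rw [hif, add_zero]
        rcases Fin.eq_zero_or_eq_succ (ρ i) with h1 | ⟨p, hp⟩
        · have hii : i = i0 := by
            apply ρ.injective
            rw [h1, hρ0]
          subst hii
          rcases Fin.eq_zero_or_eq_succ (ρ j) with h2 | ⟨q, hq⟩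
          · have hjj : j = i := by apply ρ.injective; rw [h2, h1]
            subst hjj
            exact absurd hji (lt_irrefl _)
          · rw [h1, hq, bd_zero_succ]
        · rcases Fin.eq_zero_or_eq_succ (ρ j) with h2 | ⟨q, hq⟩
          · rw [hp, h2, bd_succ_zero]
          · rw [hp, hq, bd_succ_succ]
            apply hm'u.2
            have hi' : i = i0.succAbove p := by
              rw [← hρs p, ← hp, Equiv.symm_apply_apply]
            have hj' : j = i0.succAbove q := by
              rw [← hρs q, ← hq, Equiv.symm_apply_apply]
            rw [hi', hj'] at hji
            exact Fin.succAbove_lt_succAbove_iff.mp hji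
    -- the conjugate of m by w is lower unipotent
    have hm_conj_lower : IsUnipLower K (permMat K (N+1) w⁻¹ * m * permMat K (N+1) w) := by
      constructor
      · intro i
        rw [conj_apply]
        exact hm_upper.1 (w i)
      · intro i j hij
        rw [conj_apply]
        have hj0 : j ≠ 0 := by
          intro h
          subst h
          exact absurd hij (Fin.not_lt_zero i)
        obtain ⟨q, hq⟩ := (Fin.eq_zero_or_eq_succ j).resolve_left hj0
        subst hq
        cases i using Fin.cases with
        | zero =>
          rw [hw0, hws q, hm_apply, hρ0]
          rw [if_neg (Fin.succAbove_ne i0 (w' q)), add_zero, hρs' (w' q), bd_zero_succ]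
        | succ p =>
          have hpq : p < q := by
            rwa [Fin.succ_lt_succ_iff] at hij
          rw [hws p, hws q, hm_apply]
          rw [if_neg (Fin.succAbove_ne i0 (w' q)), add_zero, hρs' (w' p), hρs' (w' q),
            bd_succ_succ]
          have hconj : m' (w' p) (w' q) = mm' p q := by
            rw [hmm'e]
            rw [show permMat K N w' = permMat K N (w'⁻¹)⁻¹ by rw [inv_inv]]
            rw [conj_apply]
            simp
          rw [hconj]
          exact hmm'l.2 p q hpq
    have hmemNw : m ∈ Nw K (N + 1) w :=
      ⟨hm_upper, permMat K (N+1) w⁻¹ * m * permMat K (N+1) w, hm_conj_lower,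
        (permMat_conj_cancel w m).symm⟩
    -- b is Borel
    have hbd_borel : IsBorel K (bd b') := by
      constructor
      · intro i j hji
        rcases Fin.eq_zero_or_eq_succ i with h1 | ⟨p, hp⟩
        · subst h1
          exact absurd hji (Fin.not_lt_zero j)
        · subst hp
          rcases Fin.eq_zero_or_eq_succ j with h2 | ⟨q, hq⟩
          · subst h2
            rw [bd_succ_zero]
          · subst hq
            rw [bd_succ_succ]
            exact hb'.1 p q (Fin.succ_lt_succ_iff.mp hji)
      · intro i
        rcases Fin.eq_zero_or_eq_succ i with h1 | ⟨p, hp⟩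
        · subst h1
          rw [bd_zero_zero]
          exact one_ne_zero
        · subst hp
          rw [bd_succ_succ]
          exact hb'.2 p
    have hCi_borel : IsBorel K Ci := by
      rw [hCi_def]
      constructor
      · intro i j hji
        have hi0' : i ≠ 0 := by
          intro h
          subst h
          exact absurd hji (Fin.not_lt_zero j)
        obtain ⟨p, hp⟩ := (Fin.eq_zero_or_eq_succ i).resolve_left hi0'
        subst hp
        rw [rowm_succ_apply, if_neg (ne_of_gt hji)]
      · intro i
        by_cases hi : i = 0
        · subst hi
          rw [rowm_zero_apply, hr'0]
          exact ha0
        · obtain ⟨p, hp⟩ := (Fin.eq_zero_or_eq_succ i).resolve_left hi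
          subst hp
          rw [rowm_succ_apply, if_pos rfl]
          exact one_ne_zero
    have hb_borel : IsBorel K b := by
      rw [hb_def]
      exact borel_mul hbd_borel hCi_borel
    -- the key identity
    have hlast : permMat K (N + 1) ρ⁻¹ * bd g' = A := by
      ext i j
      rw [permMat_mul_apply, inv_inv]
      rcases Fin.eq_zero_or_eq_succ (ρ i) with h1 | ⟨p, hp⟩
      · have hii0 : i = i0 := by apply ρ.injective; rw [h1, hρ0]
        rw [h1, hii0]
        cases j using Fin.cases with
        | zero => rw [bd_zero_zero, hA_row 0, if_pos rfl]
        | succ q => rw [bd_zero_succ, hA_row q.succ, if_neg (Fin.succ_ne_zero q)]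
      · have hi' : i = i0.succAbove p := by
          rw [← hρs p, ← hp, Equiv.symm_apply_apply]
        rw [hp]
        cases j using Fin.cases with
        | zero =>
          rw [bd_succ_zero, hA_col i, hi', if_neg (Fin.succAbove_ne i0 p)]
        | succ q =>
          rw [bd_succ_succ, hg'_def, Matrix.submatrix_apply, hi']
    have hkey : Mhat * permMat K (N + 1) w * bd b' = A := by
      have h1 : Mhat * permMat K (N + 1) w
          = permMat K (N + 1) ρ⁻¹ * bd m' * bd (permMat K N w') := by
        rw [hMhat_def, Matrix.mul_assoc (permMat K (N+1) ρ⁻¹ * bd m') (permMat K (N+1) ρ)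
          (permMat K (N+1) w), hmulw]
      calc Mhat * permMat K (N + 1) w * bd b'
          = permMat K (N + 1) ρ⁻¹ * bd m' * bd (permMat K N w') * bd b' := by rw [h1]
        _ = permMat K (N + 1) ρ⁻¹ * (bd m' * bd (permMat K N w') * bd b') := by
            simp only [Matrix.mul_assoc]
        _ = permMat K (N + 1) ρ⁻¹ * bd (m' * permMat K N w' * b') := by
            rw [bd_mul, bd_mul]
        _ = permMat K (N + 1) ρ⁻¹ * bd g' := by rw [← heq']
        _ = A := hlast
    have hfinal : g = m * permMat K (N + 1) w * b := by
      have step1 : m * permMat K (N + 1) w * b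
          = F * (Mhat * permMat K (N + 1) w * bd b') * Ci := by
        rw [hm_def, hb_def]
        simp only [Matrix.mul_assoc]
      rw [step1, hkey, hA_def]
      have step2 : F * (E * g * C) * Ci = (F * E) * g * (C * Ci) := by
        simp only [Matrix.mul_assoc]
      rw [step2, hFE, hCCi, one_mul, mul_one]
    exact ⟨w, m, b, hmemNw, hb_borel, hfinal⟩

end BruhatAux

/-- Bruhat decomposition with unipotent representatives:
`GL_n(K)` is the disjoint union over `w ∈ Sₙ` of the cosets `N_w w B`. -/
theorem stmt7 (n : ℕ) (g : GL (Fin n) K) :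
    ∃! w : Equiv.Perm (Fin n),
      ∃ (m b : Matrix (Fin n) (Fin n) K), m ∈ Nw K n w ∧ IsBorel K b ∧
        (↑g : Matrix (Fin n) (Fin n) K) = m * permMat K n w * b := by
  have hdet : (↑g : Matrix (Fin n) (Fin n) K).det ≠ 0 := by
    have h1 : IsUnit (↑g : Matrix (Fin n) (Fin n) K) := ⟨g, rfl⟩
    have h2 : IsUnit (↑g : Matrix (Fin n) (Fin n) K).det :=
      (Matrix.isUnit_iff_isUnit_det (↑g : Matrix (Fin n) (Fin n) K)).mp h1
    exact h2.ne_zero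
  obtain ⟨w, m, b, h1, h2, h3⟩ := BruhatAux.exist n (↑g : Matrix (Fin n) (Fin n) K) hdet
  refine ⟨w, ⟨m, b, h1, h2, h3⟩, ?_⟩
  rintro w2 ⟨m2, b2, hm2Nw, hb2, he2⟩
  exact BruhatAux.uniq (↑g : Matrix (Fin n) (Fin n) K) w2 w m2 m b2 b hm2Nw.1 h1.1 hb2 h2 he2 h3
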